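/- Let k ≥ 8, θ = 1 - 1/k, σ = 1/(2k² - 10k + 12), φ = θ + σ/k, t = ⌈(k/2) log k⌉, u = ⌈2k log k⌉ - t - 4. Define Λ = (k/(1-σ))(1 - φ^{u+1}) + ((k³ - k - (k³ - 2k² + 2)θ^{t-3})/(k² + k - kθ^{t-3}))φ^u. Then k - Λ = -kσ/(1-σ) + (k - 1 + O(k^{-1/2}))·θ^t·φ^u + O(k^{-5/2}) as k → ∞. -/

import Mathlib

set_option maxHeartbeats 4000000 in
theorem stmt_18 : ∃ C : ℝ, 0 < C ∧ ∃ K : ℕ, 8 ≤ K ∧ ∀ k : ℕ, K ≤ k →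
    ∀ θ σ φ Λ : ℝ, ∀ t u : ℕ,
      θ = 1 - 1/(k:ℝ) →
      σ = 1/(2*(k:ℝ)^2 - 10*k + 12) →
      φ = θ + σ/(k:ℝ) →
      t = ⌈((k:ℝ)/2) * Real.log k⌉₊ →
      u = ⌈2*(k:ℝ) * Real.log k⌉₊ - t - 4 →
      Λ = ((k:ℝ)/(1 - σ)) * (1 - φ^(u+1))
          + (((k:ℝ)^3 - k - ((k:ℝ)^3 - 2*(k:ℝ)^2 + 2)*θ^(t-3))
              / ((k:ℝ)^2 + k - k*θ^(t-3))) * φ^u →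
      ∃ E₁ E₂ : ℝ,
        |E₁| ≤ C * (k:ℝ) ^ (-(1/2:ℝ)) ∧ |E₂| ≤ C * (k:ℝ) ^ (-(5/2:ℝ)) ∧
        (k:ℝ) - Λ = -(k:ℝ)*σ/(1 - σ) + ((k:ℝ) - 1 + E₁) * θ^t * φ^u + E₂ := by
  refine ⟨20, by norm_num, 1000, by norm_num, ?_⟩
  intro k hk θ σ φ Λ t u hθ hσ hφ ht hu hΛ
  have hK : (1000:ℝ) ≤ (k:ℝ) := by exact_mod_cast hk
  set K : ℝ := (k:ℝ) with hKdef
  have hKpos : (0:ℝ) < K := by linarith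
  have hp1 : 3*K^2 ≤ K^4 := by
    nlinarith [pow_le_pow_left₀ (by norm_num : (0:ℝ) ≤ 1000) hK 2]
  have hp0 : (0:ℝ) ≤ K^2 := by positivity
  have hp4 : (0:ℝ) ≤ K^4 := by positivity
  have hp2 : K ≤ K^2 := by nlinarith
  have hKne : K ≠ 0 := ne_of_gt hKpos
  have hlogK_le : Real.log K ≤ K - 1 := Real.log_le_sub_one_of_pos hKpos
  have hL1 : (1:ℝ) ≤ Real.log K := by
    rw [Real.le_log_iff_exp_le hKpos]
    have := Real.exp_one_lt_d9
    linarith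
  have hL0 : (0:ℝ) ≤ Real.log K := by linarith
  -- basic positivity
  have hKinv : 1/K ≤ 1/1000 := by
    apply one_div_le_one_div_of_le <;> linarith
  have hθpos : (0:ℝ) < θ := by rw [hθ]; linarith
  have hθlt1 : θ < 1 := by
    rw [hθ]
    have : (0:ℝ) < 1/K := by positivity
    linarith
  have hθbig : (0.999:ℝ) ≤ θ := by rw [hθ]; linarith
  have hθ3 : (1/2:ℝ) ≤ θ^3 := by
    nlinarith [pow_le_pow_left₀ (by norm_num : (0:ℝ) ≤ 0.999) hθbig 3]
  have hθ3pos : (0:ℝ) < θ^3 := by positivity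
  have hσd : (0:ℝ) < 2*K^2 - 10*K + 12 := by nlinarith
  have hσpos : 0 < σ := by rw [hσ]; positivity
  have hσle : σ ≤ 1/K^2 := by
    rw [hσ]
    apply one_div_le_one_div_of_le
    · positivity
    · nlinarith
  have hKσ : K * σ ≤ 1/K := by
    have h1 : K * σ ≤ K * (1/K^2) := by nlinarith
    have h2 : K * (1/K^2) = 1/K := by field_simp
    linarith
  have h1σ : (1/2:ℝ) ≤ 1 - σ := by
    have : 1/K^2 ≤ 1/2 := by
      apply one_div_le_one_div_of_le
      · norm_num
      · nlinarith
    linarith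
  have h1σne : (1 - σ) ≠ 0 := by linarith
  -- t bounds
  have htl : K/2 * Real.log K ≤ (t:ℝ) := by rw [ht]; exact Nat.le_ceil _
  have htu : (t:ℝ) ≤ K/2 * Real.log K + 1 := by
    rw [ht]
    exact le_of_lt (Nat.ceil_lt_add_one (by positivity))
  have ht3 : 3 ≤ t := by
    have h3 : (3:ℝ) ≤ (t:ℝ) := by nlinarith
    exact_mod_cast h3
  have htsplit : t - 3 + 3 = t := by omega
  clear ht hu
  -- x and powers
  set x : ℝ := θ^(t-3) with hxdef
  have hxpos : 0 < x := pow_pos hθpos _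
  have hxle1 : x ≤ 1 := pow_le_one₀ (le_of_lt hθpos) (le_of_lt hθlt1)
  have hθt : θ^t = x * θ^3 := by rw [hxdef, ← pow_add, htsplit]
  have hθtpos : 0 < θ^t := pow_pos hθpos _
  -- abbreviations (before the transcendental part, to keep contexts simple)
  have hKx : K * x ≤ K := by nlinarith
  set N : ℝ := K^3 - 3*K^2 + K + 2 with hNdef
  set den : ℝ := K^2 + K - K*x with hdendef
  have hNpos : 0 < N := by rw [hNdef]; nlinarith
  have hNle : N ≤ K^3 := by rw [hNdef]; nlinarith
  have hdenge : K^2 ≤ den := by rw [hdendef]; nlinarith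
  have hdenpos : 0 < den := by nlinarith
  have hdenne : den ≠ 0 := ne_of_gt hdenpos
  have hdenle : den ≤ K^2 + K := by rw [hdendef]; nlinarith
  set A : ℝ := (K^3 - K - (K^3 - 2*K^2 + 2)*x)/den with hAdef
  set B' : ℝ := K*φ/(1-σ) - A with hB'def
  have hKφ : K*φ = K - 1 + σ := by
    rw [hφ, hθ]; field_simp
  have hAeq : A = (K - 1) - x*N/den := by
    have h9 : (K - 1) - x*N/den = ((K-1)*den - x*N)/den := by
      rw [sub_div, mul_div_cancel_right₀ _ hdenne]
    rw [hAdef, h9]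
    congr 1
    rw [hdendef, hNdef]
    ring
  -- exp representation
  have hθexp : θ^t = Real.exp (t * Real.log θ) := by
    rw [Real.exp_nat_mul, Real.exp_log hθpos]
  have hlogθ_le : Real.log θ ≤ -(1/K) := by
    have h := Real.log_le_sub_one_of_pos hθpos
    rw [hθ] at h ⊢
    linarith
  have hlogθ_ge : -(1/(K-1)) ≤ Real.log θ := by
    have hinv : 0 < θ⁻¹ := by positivity
    have h := Real.log_le_sub_one_of_pos hinv
    rw [Real.log_inv] at h
    have hθval : θ⁻¹ - 1 = 1/(K-1) := by
      rw [hθ]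
      rw [show (1:ℝ) - 1/K = (K-1)/K by field_simp]
      rw [inv_div]
      rw [div_sub_one (by linarith : K - 1 ≠ 0)]
      norm_num
    linarith [hθval ▸ h]
  set s : ℝ := Real.exp (-(Real.log K/2)) with hsdef
  have hspos : 0 < s := Real.exp_pos _
  have hsle1 : s ≤ 1 := by
    rw [hsdef, ← Real.exp_zero]
    exact Real.exp_le_exp.2 (by linarith only [hL0])
  have hs2 : s * s = 1/K := by
    rw [hsdef, ← Real.exp_add]
    rw [show -(Real.log K/2) + -(Real.log K/2) = -Real.log K by ring]
    rw [Real.exp_neg, Real.exp_log hKpos, one_div]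
  -- upper bound θ^t ≤ s
  have hθts : θ^t ≤ s := by
    rw [hθexp, hsdef]
    apply Real.exp_le_exp.2
    have h1 : (t:ℝ) * Real.log θ ≤ (t:ℝ) * (-(1/K)) :=
      mul_le_mul_of_nonneg_left hlogθ_le (by positivity)
    have h2 : (t:ℝ) * (-(1/K)) ≤ -(Real.log K/2) := by
      have h3 : K/2 * Real.log K * (1/K) = Real.log K/2 := by field_simp
      have hm := mul_le_mul_of_nonneg_right htl (le_of_lt (show (0:ℝ) < 1/K by positivity))
      have h4 : (t:ℝ) * (-(1/K)) = -((t:ℝ)*(1/K)) := by ring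
      rw [h3] at hm
      rw [h4]
      linarith only [hm]
    linarith only [h1, h2]
  -- lower bound s/3 ≤ θ^t
  have hθtls : s/3 ≤ θ^t := by
    rw [hθexp, hsdef]
    have h1 : -(Real.log K/2) - 1 ≤ (t:ℝ) * Real.log θ := by
      have ha : (t:ℝ) * (-(1/(K-1))) ≤ (t:ℝ) * Real.log θ :=
        mul_le_mul_of_nonneg_left hlogθ_ge (by positivity)
      have hc : (t:ℝ)/(K-1) ≤ Real.log K/2 + 1 := by
        rw [div_le_iff₀ (by linarith : (0:ℝ) < K - 1)]
        have hexpand : (Real.log K/2 + 1)*(K-1) = K/2*Real.log K - Real.log K/2 + K - 1 := by ring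
        rw [hexpand]
        linarith only [htu, hlogK_le, hK]
      have hb : (t:ℝ) * (-(1/(K-1))) = -((t:ℝ)/(K-1)) := by ring
      rw [hb] at ha
      linarith only [ha, hc]
    calc Real.exp (-(Real.log K/2)) / 3
        ≤ Real.exp (-(Real.log K/2)) / Real.exp 1 := by
          apply div_le_div_of_nonneg_left (le_of_lt (Real.exp_pos _)) (Real.exp_pos 1)
          linarith only [Real.exp_one_lt_d9]
      _ = Real.exp (-(Real.log K/2) - 1) := by rw [Real.exp_sub]
      _ ≤ Real.exp ((t:ℝ) * Real.log θ) := Real.exp_le_exp.2 h1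
  have hxs : x ≤ 2 * s := by
    have h : x * θ^3 ≤ s := hθt ▸ hθts
    have h5 : x * (1/2) ≤ x * θ^3 := mul_le_mul_of_nonneg_left hθ3 (le_of_lt hxpos)
    linarith only [h, h5]
  have hsrpow : K ^ (-(1/2:ℝ)) = s := by
    rw [Real.rpow_def_of_pos hKpos, hsdef]
    congr 1
    ring
  -- the error terms
  refine ⟨B'/θ^t - (K-1), 0, ?_, ?_, ?_⟩
  · -- bound on E₁
    have hE₁ : B'/θ^t - (K-1)
        = K*σ/((1-σ)*θ^t) + (N/den - (K-1)*θ^3)/θ^3 := by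
      have hfr : (K-1+σ)/(1-σ) = K-1 + K*σ/(1-σ) := by
        rw [div_eq_iff h1σne, add_mul, div_mul_cancel₀ _ h1σne]
        ring
      have hstep : B' - (K-1)*θ^t = K*σ/(1-σ) + x*(N/den - (K-1)*θ^3) := by
        rw [hB'def, hAeq, hθt, hKφ]
        linear_combination hfr
      have h2 : B'/θ^t - (K-1) = (B' - (K-1)*θ^t)/θ^t := by
        rw [eq_div_iff (ne_of_gt hθtpos), sub_mul, div_mul_cancel₀ _ (ne_of_gt hθtpos)]
      rw [h2, hstep, hθt]
      rw [add_div]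
      congr 1
      · rw [div_div]
      · rw [div_eq_div_iff (by positivity) (ne_of_gt hθ3pos)]
        ring
    -- term 1 bound
    have hterm1pos : 0 ≤ K*σ/((1-σ)*θ^t) := by positivity
    have hterm1 : K*σ/((1-σ)*θ^t) ≤ 6*s := by
      have hd : s/6 ≤ (1-σ)*θ^t := by
        have h5 : (1/2)*(s/3) ≤ (1-σ)*θ^t :=
          mul_le_mul h1σ hθtls (by positivity) (by linarith only [h1σ])
        linarith only [h5]
      have hnum9 : K*σ ≤ s*s := by rw [hs2]; exact hKσ
      have h09 : (0:ℝ) ≤ s*s := by positivity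
      have h69 : (0:ℝ) < s/6 := by positivity
      calc K*σ/((1-σ)*θ^t) ≤ (s*s)/(s/6) := div_le_div₀ h09 hnum9 h69 hd
        _ = 6*s := by
            rw [div_div_eq_mul_div, mul_comm (s*s) 6, mul_div_assoc, mul_div_assoc,
              div_self (ne_of_gt hspos), mul_one]
    -- term 2 bound
    have hKKpos : (0:ℝ) < K^2 + K := by positivity
    have hdiff1 : N/den - N/(K^2+K) = N*(K*x)/(den*(K^2+K)) := by
      rw [div_sub_div _ _ hdenne (ne_of_gt hKKpos)]
      congr 1
      rw [hdendef]
      ring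
    have hdiff1b : N*(K*x)/(den*(K^2+K)) ≤ x := by
      have h1 : N*(K*x) ≤ K^4*x := by
        have h5 : N*(K*x) ≤ K^3*(K*x) :=
          mul_le_mul_of_nonneg_right hNle (by positivity)
        have h6 : K^3*(K*x) = K^4*x := by ring
        linarith only [h5, h6]
      have h2 : K^4 ≤ den*(K^2+K) := by
        have hKK : K^2 ≤ K^2 + K := by linarith
        have hK2nn : (0:ℝ) ≤ K^2 := by positivity
        have hdennn : (0:ℝ) ≤ den := le_of_lt hdenpos
        have h5 : K^2*K^2 ≤ den*(K^2+K) := mul_le_mul hdenge hKK hK2nn hdennn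
        have h6 : K^2*K^2 = K^4 := by ring
        linarith only [h5, h6]
      have h091 : (0:ℝ) ≤ K^4*x := by positivity
      have h092 : (0:ℝ) < K^4 := by positivity
      calc N*(K*x)/(den*(K^2+K)) ≤ K^4*x/(K^4) := div_le_div₀ h091 h1 h092 h2
        _ = x := by
            rw [mul_comm (K^4) x, mul_div_assoc, div_self (by positivity : (K:ℝ)^4 ≠ 0), mul_one]
    have hdiff1pos : 0 ≤ N*(K*x)/(den*(K^2+K)) := by positivity
    have hdiff2 : N/(K^2+K) - (K-1)*θ^3 = (-(K^4) + 3*K^2 - K)/((K^2+K)*K^3) := by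
      have hθfrac : θ = (K-1)/K := by rw [hθ, one_sub_div hKne]
      have hc1 : (K-1)*θ^3 = (K-1)^4/K^3 := by
        rw [hθfrac, div_pow, mul_div_assoc']
        congr 1
        ring
      rw [hc1, div_sub_div _ _ (ne_of_gt hKKpos) (by positivity : (K:ℝ)^3 ≠ 0)]
      congr 1
      rw [hNdef]
      ring
    have hdiff2b : |(-(K^4) + 3*K^2 - K)/((K^2+K)*K^3)| ≤ s := by
      rw [abs_div]
      have h1 : |(-(K^4) + 3*K^2 - K)| ≤ K^4 := by
        rw [abs_le]
        constructor <;> linarith only [hp1, hp2, hp0, hp4, hKpos]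
      have h2 : |(K^2+K)*K^3| = (K^2+K)*K^3 := abs_of_pos (by positivity)
      have h3 : K^5 ≤ (K^2+K)*K^3 := by
        have h7 : (K^2+K)*K^3 = K^5 + K^4 := by ring
        have h8 : (0:ℝ) < K^4 := by positivity
        linarith only [h7, h8]
      rw [h2]
      have h093 : (0:ℝ) ≤ K^4 := by positivity
      have h094 : (0:ℝ) < K^5 := by positivity
      have h4 : |(-(K^4) + 3*K^2 - K)|/((K^2+K)*K^3) ≤ K^4/K^5 :=
        div_le_div₀ h093 h1 h094 h3
      have h5 : K^4/K^5 = 1/K := by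
        rw [div_eq_div_iff (by positivity : (0:ℝ) < K^5).ne' hKne]
        ring
      have h6 : (1:ℝ)/K ≤ s := by
        have h7 : s*s ≤ s*1 := mul_le_mul_of_nonneg_left hsle1 (le_of_lt hspos)
        rw [mul_one] at h7
        linarith only [hs2 ▸ h7]
      linarith only [h4, h5, h6]
    have hnum : |N/den - (K-1)*θ^3| ≤ 3*s := by
      have hsplit : N/den - (K-1)*θ^3
          = (N/den - N/(K^2+K)) + (N/(K^2+K) - (K-1)*θ^3) := by ring
      rw [hsplit]
      calc |(N/den - N/(K^2+K)) + (N/(K^2+K) - (K-1)*θ^3)|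
          ≤ |N/den - N/(K^2+K)| + |N/(K^2+K) - (K-1)*θ^3| := abs_add_le _ _
        _ ≤ 2*s + s := by
            gcongr
            · rw [hdiff1, abs_of_nonneg hdiff1pos]
              linarith only [hdiff1b, hxs]
            · rw [hdiff2]; exact hdiff2b
        _ = 3*s := by ring
    have hterm2 : |(N/den - (K-1)*θ^3)/θ^3| ≤ 6*s := by
      rw [abs_div, abs_of_pos hθ3pos]
      have h095 : (0:ℝ) ≤ 3*s := by positivity
      have h096 : (0:ℝ) < (1:ℝ)/2 := by norm_num
      calc |N/den - (K-1)*θ^3|/θ^3 ≤ (3*s)/(1/2) := div_le_div₀ h095 hnum h096 hθ3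
        _ = 6*s := by ring
    rw [hE₁, hsrpow]
    calc |K*σ/((1-σ)*θ^t) + (N/den - (K-1)*θ^3)/θ^3|
        ≤ |K*σ/((1-σ)*θ^t)| + |(N/den - (K-1)*θ^3)/θ^3| := abs_add_le _ _
      _ ≤ 6*s + 6*s :=
          add_le_add (by rw [abs_of_nonneg hterm1pos]; exact hterm1) hterm2
      _ ≤ 20 * s := by linarith only [hspos]
  · -- bound on E₂ = 0
    rw [abs_zero]
    positivity
  · -- the equation
    have hfrac : (K - 1 + (B'/θ^t - (K-1))) * θ^t = B' := by
      have h9 : K - 1 + (B'/θ^t - (K-1)) = B'/θ^t := by ring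
      rw [h9, div_mul_cancel₀ _ (ne_of_gt hθtpos)]
    have hw : K - K/(1-σ) = -K*σ/(1-σ) := by
      rw [eq_div_iff h1σne, sub_mul, div_mul_cancel₀ _ h1σne]
      ring
    have key : K - (K/(1-σ)*(1-φ^(u+1)) + A*φ^u) = -K*σ/(1-σ) + B'*φ^u := by
      rw [hB'def, pow_succ]
      linear_combination hw
    rw [hΛ, key, hfrac]
    ring
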